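/- arXiv:1011.3368 — 2 statements merged into one kernel-verified Lean document; each statement's English description precedes it below -/
import Mathlib

section
/- Let u be a complex number which is neither real nor purely imaginary (i.e. Re u ≠ 0 and Im u ≠ 0). Then the set of real numbers r for which e^{ru} and its complex conjugate conj(e^{ru}) are algebraically dependent over ℚ is countable. In particular, for all real r outside a countable set, e^{ru} and conj(e^{ru}) are algebraically independent over ℚ. -/
open Complex MvPolynomial Topology

noncomputable def expChar (c : ℂ) : Multiplicative ℂ →* ℂ where
  toFun z := Complex.exp (Multiplicative.toAdd z * c)
  map_one' := by simp
  map_mul' a b := by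
    simp [toAdd_mul, add_mul, Complex.exp_add]

lemma expChar_injective : Function.Injective expChar := by
  intro c c' h
  by_contra hne
  have hd : c - c' ≠ 0 := sub_ne_zero.mpr hne
  have := congrArg (fun f : Multiplicative ℂ →* ℂ =>
    f (Multiplicative.ofAdd ((Real.pi * I) / (c - c')))) h
  simp only [expChar, MonoidHom.coe_mk, OneHom.coe_mk, toAdd_ofAdd] at this
  have h2 : Complex.exp ((Real.pi * I) / (c - c') * c - (Real.pi * I) / (c - c') * c') = 1 := by
    rw [Complex.exp_sub, this, div_self (Complex.exp_ne_zero _)]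
  rw [← mul_sub, div_mul_cancel₀ _ hd, Complex.exp_pi_mul_I] at h2
  norm_num at h2

lemma countable_zeros {f : ℂ → ℂ} (hf : Differentiable ℂ f) (h : ∃ z, f z ≠ 0) :
    {z : ℂ | f z = 0}.Countable := by
  have hA : AnalyticOnNhd ℂ f Set.univ :=
    hf.differentiableOn.analyticOnNhd isOpen_univ
  have hdisc : DiscreteTopology {z : ℂ | f z = 0} := by
    rw [discreteTopology_subtype_iff]
    intro x hx
    by_contra hb
    have hne : (𝓝[≠] x ⊓ Filter.principal {z : ℂ | f z = 0}).NeBot := ⟨hb⟩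
    have hfreq : ∃ᶠ z in 𝓝[≠] x, f z = 0 := Filter.frequently_iff_neBot.mpr hne
    have heq := hA.eqOn_zero_of_preconnected_of_frequently_eq_zero isPreconnected_univ
      (Set.mem_univ x) hfreq
    obtain ⟨z, hz⟩ := h
    exact hz (heq (Set.mem_univ z))
  have : Countable {z : ℂ | f z = 0} :=
    TopologicalSpace.separableSpace_iff_countable.mp inferInstance
  exact Set.countable_coe_iff.mp this

lemma aeval_sum_form (u : ℂ) (p : MvPolynomial (Fin 2) ℚ) (z : ℂ) :
    (aeval ![Complex.exp (z * u), Complex.exp (z * (starRingEnd ℂ) u)]) p =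
      ∑ d ∈ p.support, (algebraMap ℚ ℂ (p.coeff d)) *
        Complex.exp (z * ((d 0 : ℂ) * u + (d 1 : ℂ) * (starRingEnd ℂ) u)) := by
  rw [aeval_def, eval₂_eq']
  refine Finset.sum_congr rfl fun d _ => ?_
  congr 1
  rw [Fin.prod_univ_two]
  simp only [Matrix.cons_val_zero, Matrix.cons_val_one, Matrix.head_cons]
  rw [← Complex.exp_nat_mul, ← Complex.exp_nat_mul, ← Complex.exp_add]
  congr 1
  ring

lemma freq_injective (u : ℂ) (hre : u.re ≠ 0) (him : u.im ≠ 0) :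
    Function.Injective fun d : Fin 2 →₀ ℕ =>
      (d 0 : ℂ) * u + (d 1 : ℂ) * (starRingEnd ℂ) u := by
  intro d d' h
  have hreq := congrArg Complex.re h
  have himq := congrArg Complex.im h
  simp [Complex.add_re, Complex.add_im, Complex.mul_re, Complex.mul_im, Complex.conj_re,
    Complex.conj_im] at hreq himq
  have h1 : ((d 0 : ℝ) + d 1) * u.re = ((d' 0 : ℝ) + d' 1) * u.re := by ring_nf; ring_nf at hreq; linarith
  have h2 : ((d 0 : ℝ) - d 1) * u.im = ((d' 0 : ℝ) - d' 1) * u.im := by ring_nf; ring_nf at himq; linarith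
  have e1 : (d 0 : ℝ) + d 1 = (d' 0 : ℝ) + d' 1 := mul_right_cancel₀ hre h1
  have e2 : (d 0 : ℝ) - d 1 = (d' 0 : ℝ) - d' 1 := mul_right_cancel₀ him h2
  have e3 : (d 0 : ℝ) = d' 0 := by linarith
  have e4 : (d 1 : ℝ) = d' 1 := by linarith
  ext i
  fin_cases i
  · exact_mod_cast e3
  · exact_mod_cast e4

lemma exists_ne_zero (u : ℂ) (hre : u.re ≠ 0) (him : u.im ≠ 0) (p : MvPolynomial (Fin 2) ℚ)
    (hp : p ≠ 0) :
    ∃ z : ℂ, (aeval ![Complex.exp (z * u), Complex.exp (z * (starRingEnd ℂ) u)]) p ≠ 0 := by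
  by_contra hc
  push_neg at hc
  set w : (Fin 2 →₀ ℕ) → ℂ :=
    fun d => (d 0 : ℂ) * u + (d 1 : ℂ) * (starRingEnd ℂ) u with hw
  have hinj : Function.Injective fun d => expChar (w d) :=
    expChar_injective.comp (freq_injective u hre him)
  have li : LinearIndependent ℂ
      ((fun f : Multiplicative ℂ →* ℂ => (f : Multiplicative ℂ → ℂ)) ∘ fun d => expChar (w d)) :=
    (linearIndependent_monoidHom (Multiplicative ℂ) ℂ).comp _ hinj
  have hsum : ∑ d ∈ p.support, (algebraMap ℚ ℂ (p.coeff d)) •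
      (((fun f : Multiplicative ℂ →* ℂ => (f : Multiplicative ℂ → ℂ)) ∘
        fun d => expChar (w d)) d) = 0 := by
    funext z
    have h := hc (Multiplicative.toAdd z)
    rw [aeval_sum_form] at h
    simpa [expChar] using h
  have hz := linearIndependent_iff'.mp li p.support
    (fun d => algebraMap ℚ ℂ (p.coeff d)) hsum
  obtain ⟨d, hd⟩ := MvPolynomial.support_nonempty.mpr hp
  have h0 : algebraMap ℚ ℂ (p.coeff d) = 0 := hz d hd
  have : p.coeff d = 0 := (map_eq_zero_iff _ (algebraMap ℚ ℂ).injective).mp h0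
  exact (MvPolynomial.mem_support_iff.mp hd) this

instance : Countable (MvPolynomial (Fin 2) ℚ) :=
  (AddMonoidAlgebra.coeffEquiv (R := ℚ) (M := Fin 2 →₀ ℕ)).injective.countable

/-- If `u` is a complex number which is neither real nor purely imaginary, then the set of
real `r` for which `e^{ru}` and its complex conjugate are algebraically dependent over ℚ
is countable. -/
theorem countable_alg_dep_set (u : ℂ) (hre : u.re ≠ 0) (him : u.im ≠ 0) :
    Set.Countable {r : ℝ | ¬ AlgebraicIndependent ℚ
      ![Complex.exp ((r : ℂ) * u), (starRingEnd ℂ) (Complex.exp ((r : ℂ) * u))]} := by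
  have key : {r : ℝ | ¬ AlgebraicIndependent ℚ
      ![Complex.exp ((r : ℂ) * u), (starRingEnd ℂ) (Complex.exp ((r : ℂ) * u))]} ⊆
      ⋃ p ∈ {p : MvPolynomial (Fin 2) ℚ | p ≠ 0},
        {r : ℝ | (aeval ![Complex.exp ((r : ℂ) * u),
          Complex.exp ((r : ℂ) * (starRingEnd ℂ) u)]) p = 0} := by
    intro r hr
    simp only [Set.mem_setOf_eq] at hr
    rw [algebraicIndependent_iff] at hr
    push_neg at hr
    obtain ⟨p, hp0, hpne⟩ := hr
    have hconj : (starRingEnd ℂ) (Complex.exp ((r : ℂ) * u)) =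
        Complex.exp ((r : ℂ) * (starRingEnd ℂ) u) := by
      rw [← Complex.exp_conj, map_mul, Complex.conj_ofReal]
    refine Set.mem_biUnion hpne ?_
    simp only [Set.mem_setOf_eq]
    rw [← hconj]
    exact hp0
  refine Set.Countable.mono key ?_
  refine (Set.to_countable _).biUnion ?_
  intro p hp
  have hd : Differentiable ℂ (fun z : ℂ =>
      (aeval ![Complex.exp (z * u), Complex.exp (z * (starRingEnd ℂ) u)]) p) := by
    have heq : (fun z : ℂ =>
        (aeval ![Complex.exp (z * u), Complex.exp (z * (starRingEnd ℂ) u)]) p) =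
        fun z => ∑ d ∈ p.support, (algebraMap ℚ ℂ (p.coeff d)) *
          Complex.exp (z * ((d 0 : ℂ) * u + (d 1 : ℂ) * (starRingEnd ℂ) u)) :=
      funext (aeval_sum_form u p)
    rw [heq]
    apply Differentiable.fun_sum
    intro d _
    exact (differentiable_const _).mul
      (Complex.differentiable_exp.comp (differentiable_id.mul_const _))
  have hcount := countable_zeros hd (exists_ne_zero u hre him p hp)
  exact hcount.preimage Complex.ofReal_injective
end

section
/- Let τ be a complex number with Im τ ≠ 0 and let Λ_τ = ℤ + ℤτ be the additive subgroup of ℂ generated by 1 and τ. Then Re τ is rational if and only if there exists an additive subgroup Λ of ℂ contained in Λ_τ which is stable under complex conjugation (conj(Λ) = Λ) and which contains two elements that are linearly independent over ℝ (equivalently, Λ is a sublattice of finite index in Λ_τ). -/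
/-- For `τ` with `Im τ ≠ 0` and `Λ_τ = ℤ + ℤτ`, the real part of `τ` is rational if and
only if there is an additive subgroup `Λ ⊆ Λ_τ` stable under complex conjugation and
containing two elements linearly independent over ℝ. -/
theorem re_rational_iff_conj_stable_sublattice (τ : ℂ) (hτ : τ.im ≠ 0) :
    (∃ q : ℚ, τ.re = (q : ℝ)) ↔
    ∃ Λ : AddSubgroup ℂ,
      (Λ : Set ℂ) ⊆ (AddSubgroup.closure {1, τ} : AddSubgroup ℂ) ∧
      (starRingEnd ℂ) '' (Λ : Set ℂ) = (Λ : Set ℂ) ∧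
      ∃ x y : ℂ, x ∈ Λ ∧ y ∈ Λ ∧ LinearIndependent ℝ ![x, y] := by
  constructor
  · rintro ⟨q, hq⟩
    set x : ℂ := (q.den : ℂ) with hxdef
    set y : ℂ := (q.den : ℂ) * τ - (q.num : ℂ) with hydef
    have hden : (q.den : ℝ) ≠ 0 := by exact_mod_cast q.den_nz
    have hre : (q.den : ℝ) * τ.re = (q.num : ℝ) := by
      rw [hq]; rw [Rat.cast_def]; field_simp
    have hyre : y.re = 0 := by
      simp [hydef, hre]
    have hyim : y.im = (q.den : ℝ) * τ.im := by simp [hydef]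
    refine ⟨AddSubgroup.closure {x, y}, ?_, ?_, x, y,
      AddSubgroup.subset_closure (by simp), AddSubgroup.subset_closure (by simp), ?_⟩
    · intro z hz
      obtain ⟨m, n, rfl⟩ := AddSubgroup.mem_closure_pair.mp hz
      refine AddSubgroup.mem_closure_pair.mpr ⟨m * q.den - n * q.num, n * q.den, ?_⟩
      simp only [zsmul_eq_mul, hxdef, hydef]
      push_cast
      ring
    · have hconjx : (starRingEnd ℂ) x = x := by
        simp [hxdef]
      have hconjy : (starRingEnd ℂ) y = -y := by
        apply Complex.ext <;> simp [hyre]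
      have key : ∀ z ∈ AddSubgroup.closure {x, y}, (starRingEnd ℂ) z ∈
          AddSubgroup.closure {x, y} := by
        intro z hz
        obtain ⟨m, n, rfl⟩ := AddSubgroup.mem_closure_pair.mp hz
        refine AddSubgroup.mem_closure_pair.mpr ⟨m, -n, ?_⟩
        simp only [map_add, map_zsmul, hconjx, hconjy]
        simp
      ext z
      constructor
      · rintro ⟨w, hw, rfl⟩
        exact key w hw
      · intro hz
        exact ⟨(starRingEnd ℂ) z, key z hz, Complex.conj_conj z⟩
    · rw [linearIndependent_fin2]
      constructor
      · simp only [Matrix.cons_val_one, Matrix.head_cons, Matrix.cons_val_zero]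
        intro h
        apply hτ
        have := congrArg Complex.im h
        rw [hyim] at this
        simpa [hden] using this
      · intro a h
        simp only [Matrix.cons_val_one, Matrix.head_cons, Matrix.cons_val_zero] at h
        have him := congrArg Complex.im h
        have hre' := congrArg Complex.re h
        simp only [Complex.smul_im, Complex.smul_re, hyim, hyre, hxdef,
          Complex.natCast_im, Complex.natCast_re, mul_zero] at him hre'
        have ha : a = 0 := by
          rw [smul_eq_mul, mul_eq_zero] at him
          rcases him with h1 | h1
          · exact h1
          · rcases mul_eq_zero.mp h1 with h2 | h2
            · exact absurd h2 hden
            · exact absurd h2 hτ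
        rw [ha, zero_smul] at hre'
        exact hden hre'.symm
  · rintro ⟨Λ, hsub, hconj, x, y, hx, hy, hli⟩
    -- write x and y in terms of the lattice basis
    obtain ⟨m₁, n₁, hx'⟩ := AddSubgroup.mem_closure_pair.mp (hsub hx)
    obtain ⟨m₂, n₂, hy'⟩ := AddSubgroup.mem_closure_pair.mp (hsub hy)
    -- find an element of Λ with nonzero τ-coefficient
    obtain ⟨z, hz, m, n, hzn, hn⟩ :
        ∃ z ∈ Λ, ∃ m n : ℤ, (m : ℂ) + (n : ℂ) * τ = z ∧ n ≠ 0 := by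
      by_cases h1 : n₁ = 0
      · refine ⟨y, hy, m₂, n₂, by rw [← hy']; simp [zsmul_eq_mul], ?_⟩
        intro h2
        rw [linearIndependent_fin2] at hli
        obtain ⟨hy0, hxy⟩ := hli
        simp only [Matrix.cons_val_one, Matrix.head_cons, Matrix.cons_val_zero] at hy0 hxy
        subst h1; subst h2
        simp only [zsmul_eq_mul, mul_one] at hx' hy'
        push_cast at hx' hy'
        simp only [zero_mul, add_zero] at hx' hy'
        have hm2 : (m₂ : ℝ) ≠ 0 := by
          intro h; apply hy0; rw [← hy']; exact_mod_cast congrArg Complex.ofReal h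
        apply hxy ((m₁ : ℝ) / (m₂ : ℝ))
        rw [← hx', ← hy']
        push_cast
        rw [Complex.real_smul]
        set_option linter.unusedTactic false in push_cast
        exact div_mul_cancel₀ _ (by exact_mod_cast hm2)
      · exact ⟨x, hx, m₁, n₁, by rw [← hx']; simp [zsmul_eq_mul], h1⟩
    -- conj z ∈ Λ, hence z + conj z ∈ Λ ⊆ Λ_τ
    have hcz : (starRingEnd ℂ) z ∈ Λ := by
      rw [← SetLike.mem_coe, ← hconj]
      exact ⟨z, hz, rfl⟩
    have hsum : z + (starRingEnd ℂ) z ∈ (AddSubgroup.closure {1, τ} : AddSubgroup ℂ) :=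
      hsub (Λ.add_mem hz hcz)
    obtain ⟨p, r, hpr⟩ := AddSubgroup.mem_closure_pair.mp hsum
    -- z + conj z is real
    have hreal : z + (starRingEnd ℂ) z = ((2 * z.re : ℝ) : ℂ) := by
      apply Complex.ext <;> simp [Complex.add_re, Complex.add_im]; ring
    rw [hreal] at hpr
    simp only [zsmul_eq_mul, mul_one] at hpr
    have him : (r : ℝ) * τ.im = 0 := by
      have := congrArg Complex.im hpr
      simpa using this
    have hr0 : r = 0 := by
      rcases mul_eq_zero.mp him with h | h
      · exact_mod_cast h
      · exact absurd h hτ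
    subst hr0
    simp only [Int.cast_zero, zero_mul, add_zero] at hpr
    have hzre : z.re = (m : ℝ) + (n : ℝ) * τ.re := by
      have := congrArg Complex.re hzn
      simpa using this.symm
    have hp : (2 : ℝ) * ((m : ℝ) + (n : ℝ) * τ.re) = (p : ℝ) := by
      have := congrArg Complex.re hpr
      rw [hzre] at this
      simpa using this.symm
    refine ⟨(p - 2 * m : ℚ) / (2 * n : ℚ), ?_⟩
    have hn' : (n : ℝ) ≠ 0 := by exact_mod_cast hn
    push_cast
    field_simp
    linarith [hp]
end
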